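/- arXiv:2411.11793 — 3 statements merged into one kernel-verified Lean document; each statement's English description precedes it below -/
import Mathlib

section
/- Let Γ be a w-potential game with potential P satisfying the regularity assumptions, and let {s^k}_{k≥0} be a best-response sequence. Then every cluster point of the sequence {s^k}_{k≥1} is a Nash equilibrium of Γ, i.e., if a subsequence s^{φ(k)} converges to s* ∈ S, then P_i(s*) ≥ P_i(x_i, s*_{−i}) for all i ∈ [m] and all x_i ∈ S_i. -/
open Finset Filter

/-- A best-response sequence: at stage `k+1`, players sequentially update,
player `i` best-responding to the already-updated strategies of players `j < i`
and the previous strategies of players `j > i`. -/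
def IsBRSeq {m d : ℕ} (S : Fin m → Set (EuclideanSpace ℝ (Fin d)))
    (Pay : Fin m → (Fin m → EuclideanSpace ℝ (Fin d)) → ℝ)
    (s : ℕ → Fin m → EuclideanSpace ℝ (Fin d)) : Prop :=
  (∀ i, s 0 i ∈ S i) ∧
  ∀ k : ℕ, ∀ i : Fin m,
    s (k + 1) i ∈ S i ∧
    ∀ x ∈ S i,
      Pay i (Function.update (fun j => if (j : ℕ) < (i : ℕ) then s (k + 1) j else s k j) i x) ≤
      Pay i (Function.update (fun j => if (j : ℕ) < (i : ℕ) then s (k + 1) j else s k j) i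
        (s (k + 1) i))


lemma strongConcave_max_gain {E : Type*} [NormedAddCommGroup E] [InnerProductSpace ℝ E]
    {s : Set E} {a : ℝ} {f : E → ℝ} (hf : StrongConcaveOn s a f) {x y : E}
    (hx : x ∈ s) (hy : y ∈ s) (hmax : ∀ z ∈ s, f z ≤ f x) :
    f y + a / 2 * ‖y - x‖ ^ 2 ≤ f x := by
  obtain ⟨c, hc⟩ : ∃ c : ℝ, c = a / 2 * ‖y - x‖ ^ 2 := ⟨_, rfl⟩
  rw [← hc]
  have key : ∀ n : ℕ, f y + (1 - 1 / (n + 1 : ℝ)) * c ≤ f x := by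
    intro n
    set t : ℝ := 1 / (n + 1 : ℝ) with ht
    have ht0 : 0 < t := by positivity
    have ht1 : t ≤ 1 := by
      rw [ht, div_le_one (by positivity)]
      linarith [Nat.cast_nonneg (α := ℝ) n]
    have hb0 : (0:ℝ) ≤ 1 - t := by linarith
    have hsum : t + (1 - t) = 1 := by ring
    have h2 := hf.2 hy hx ht0.le hb0 hsum
    have hmem : t • y + (1 - t) • x ∈ s := hf.1 hy hx ht0.le hb0 hsum
    have h3 : t * f y + (1 - t) * f x + t * (1 - t) * c ≤ f x := by
      rw [hc]
      simpa using h2.trans (hmax _ hmem)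
    nlinarith [h3, ht0, mul_pos ht0 ht0]
  have hlim : Tendsto (fun n : ℕ => f y + (1 - 1 / (n + 1 : ℝ)) * c) atTop
      (nhds (f y + (1 - 0) * c)) :=
    tendsto_const_nhds.add
      ((tendsto_const_nhds.sub tendsto_one_div_add_atTop_nhds_zero_nat).mul_const c)
  have := le_of_tendsto hlim (Filter.Eventually.of_forall key)
  linarith

/-- The hybrid profile within round `k -> k+1` where the first `n` players updated. -/
def brHybrid {m d : ℕ} (s : ℕ → Fin m → EuclideanSpace ℝ (Fin d)) (k n : ℕ) :
    Fin m → EuclideanSpace ℝ (Fin d) :=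
  fun j => if (j : ℕ) < n then s (k + 1) j else s k j

/-- Every cluster point of a best-response sequence in a
`w`-potential game is a Nash equilibrium. -/
theorem potential_game_BR_cluster_point_is_NE
    (m d : ℕ) (hm : 1 ≤ m)
    (S : Fin m → Set (EuclideanSpace ℝ (Fin d)))
    (hSne : ∀ i, (S i).Nonempty) (hScpt : ∀ i, IsCompact (S i))
    (hScvx : ∀ i, Convex ℝ (S i))
    (Pay : Fin m → (Fin m → EuclideanSpace ℝ (Fin d)) → ℝ)
    (α : Fin m → ℝ) (hα : ∀ i, 0 < α i)
    (hconc : ∀ (i : Fin m) (s : Fin m → EuclideanSpace ℝ (Fin d)), (∀ j, s j ∈ S j) →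
      StrongConcaveOn (S i) (α i) (fun x => Pay i (Function.update s i x)))
    (gradP : Fin m → (Fin m → EuclideanSpace ℝ (Fin d)) → EuclideanSpace ℝ (Fin d))
    (hgrad : ∀ (i : Fin m) (s : Fin m → EuclideanSpace ℝ (Fin d)), (∀ j, s j ∈ S j) →
      HasGradientAt (fun x => Pay i (Function.update s i x)) (gradP i s) (s i))
    (L : ℝ) (hL : 0 < L)
    (hLip : ∀ (i : Fin m) (s s' : Fin m → EuclideanSpace ℝ (Fin d)),
      (∀ j, s j ∈ S j) → (∀ j, s' j ∈ S j) →
      ‖gradP i s - gradP i s'‖ ≤ L * Real.sqrt (∑ j, ‖s j - s' j‖ ^ 2))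
    (w : Fin m → ℝ) (hw : ∀ i, 0 < w i)
    (P : (Fin m → EuclideanSpace ℝ (Fin d)) → ℝ)
    (hpot : ∀ (i : Fin m) (s : Fin m → EuclideanSpace ℝ (Fin d)), (∀ j, s j ∈ S j) →
      ∀ x ∈ S i,
      Pay i s - Pay i (Function.update s i x) = w i * (P s - P (Function.update s i x)))
    (s : ℕ → Fin m → EuclideanSpace ℝ (Fin d)) (hs : IsBRSeq S Pay s)
    (φ : ℕ → ℕ) (hφ : StrictMono φ) (hφ1 : ∀ k, 1 ≤ φ k)
    (sstar : Fin m → EuclideanSpace ℝ (Fin d)) (hstar : ∀ i, sstar i ∈ S i)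
    (hconv : Tendsto (fun k => s (φ k)) atTop (nhds sstar)) :
    ∀ i : Fin m, ∀ x ∈ S i,
      Pay i (Function.update sstar i x) ≤ Pay i sstar := by
  classical
  -- all iterates stay in S
  have hmem : ∀ k, ∀ j, s k j ∈ S j := by
    intro k
    induction k with
    | zero => exact hs.1
    | succ k ih => exact fun j => (hs.2 k j).1
  -- uniform radius bound
  obtain ⟨R, hR0, hR⟩ : ∃ R : ℝ, 0 ≤ R ∧ ∀ j, ∀ x ∈ S j, ‖x‖ ≤ R := by
    have hb : ∀ j, ∃ r : ℝ, ∀ x ∈ S j, ‖x‖ ≤ r := by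
      intro j
      obtain ⟨r, hr⟩ := (hScpt j).isBounded.subset_closedBall 0
      exact ⟨r, fun x hx => by simpa using hr hx⟩
    choose Rj hRj using hb
    refine ⟨∑ j, max (Rj j) 0, Finset.sum_nonneg fun j _ => le_max_right _ _, ?_⟩
    intro j x hx
    calc ‖x‖ ≤ Rj j := hRj j x hx
      _ ≤ max (Rj j) 0 := le_max_left _ _
      _ ≤ ∑ j, max (Rj j) 0 :=
        Finset.single_le_sum (fun j _ => le_max_right (Rj j) 0) (Finset.mem_univ j)
  -- base point
  have hs0mem : ∀ j, (fun j => (hSne j).some) j ∈ S j := fun j => (hSne j).some_mem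
  set s0 : Fin m → EuclideanSpace ℝ (Fin d) := fun j => (hSne j).some with hs0def
  -- gradient bound on S
  set M : Fin m → ℝ := fun i => ‖gradP i s0‖ + L * Real.sqrt (m * (2 * R) ^ 2) with hMdef
  have hM0 : ∀ i, 0 ≤ M i := fun i =>
    add_nonneg (norm_nonneg _) (mul_nonneg hL.le (Real.sqrt_nonneg _))
  have hMb : ∀ (i : Fin m) (σ : Fin m → EuclideanSpace ℝ (Fin d)),
      (∀ j, σ j ∈ S j) → ‖gradP i σ‖ ≤ M i := by
    intro i σ hσ
    have h1 : ‖gradP i σ‖ ≤ ‖gradP i s0‖ + ‖gradP i σ - gradP i s0‖ := by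
      have := norm_add_le (gradP i s0) (gradP i σ - gradP i s0)
      simpa using this
    have h2 := hLip i σ s0 hσ hs0mem
    have h3 : Real.sqrt (∑ j, ‖σ j - s0 j‖ ^ 2) ≤ Real.sqrt (m * (2 * R) ^ 2) := by
      apply Real.sqrt_le_sqrt
      calc ∑ j, ‖σ j - s0 j‖ ^ 2 ≤ ∑ _j : Fin m, (2 * R) ^ 2 := by
            apply Finset.sum_le_sum
            intro j _
            have hn : ‖σ j - s0 j‖ ≤ 2 * R := by
              have := norm_sub_le (σ j) (s0 j)
              have h1 := hR j _ (hσ j)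
              have h2 := hR j _ (hs0mem j)
              simp only [hs0def] at *
              linarith
            nlinarith [norm_nonneg (σ j - s0 j)]
        _ = m * (2 * R) ^ 2 := by simp [Finset.sum_const, mul_comm]
    have h4 : L * Real.sqrt (∑ j, ‖σ j - s0 j‖ ^ 2) ≤ L * Real.sqrt (m * (2 * R) ^ 2) :=
      mul_le_mul_of_nonneg_left h3 hL.le
    simp only [hMdef]
    linarith
  -- payoff is M i-Lipschitz in own coordinate
  have hPayLip : ∀ (i : Fin m) (σ : Fin m → EuclideanSpace ℝ (Fin d)),
      (∀ j, σ j ∈ S j) → ∀ x ∈ S i, ∀ y ∈ S i,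
      ‖Pay i (Function.update σ i y) - Pay i (Function.update σ i x)‖ ≤ M i * ‖y - x‖ := by
    intro i σ hσ x hx y hy
    have hupdmem : ∀ z ∈ S i, ∀ j, Function.update σ i z j ∈ S j := by
      intro z hz j
      rcases eq_or_ne j i with rfl | hne
      · simpa using hz
      · rw [Function.update_of_ne hne]; exact hσ j
    have hder : ∀ z ∈ S i, HasFDerivWithinAt (fun z => Pay i (Function.update σ i z))
        (InnerProductSpace.toDual ℝ (EuclideanSpace ℝ (Fin d))
          (gradP i (Function.update σ i z))) (S i) z := by
      intro z hz
      have h := (hgrad i (Function.update σ i z) (hupdmem z hz)).hasFDerivAt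
      simp only [Function.update_idem, Function.update_self] at h
      exact h.hasFDerivWithinAt
    have hbound : ∀ z ∈ S i,
        ‖InnerProductSpace.toDual ℝ (EuclideanSpace ℝ (Fin d))
          (gradP i (Function.update σ i z))‖ ≤ M i := by
      intro z hz
      rw [LinearIsometryEquiv.norm_map]
      exact hMb i _ (hupdmem z hz)
    exact (hScvx i).norm_image_sub_le_of_norm_hasFDerivWithin_le hder hbound hx hy
  -- potential difference bound
  have hPdiff : ∀ σ τ : Fin m → EuclideanSpace ℝ (Fin d),
      (∀ j, σ j ∈ S j) → (∀ j, τ j ∈ S j) →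
      |P τ - P σ| ≤ ∑ j, (M j / w j) * ‖τ j - σ j‖ := by
    intro σ τ hσ hτ
    have claim : ∀ n : ℕ,
        |P (fun l : Fin m => if (l : ℕ) < n then τ l else σ l) - P σ| ≤
          ∑ j : Fin m, (if (j : ℕ) < n then (M j / w j) * ‖τ j - σ j‖ else 0) := by
      intro n
      induction n with
      | zero =>
        simp
      | succ n ih =>
        by_cases hnm : n < m
        · set i : Fin m := ⟨n, hnm⟩ with hidef
          have hmemh : ∀ j, (fun l : Fin m => if (l : ℕ) < n then τ l else σ l) j ∈ S j := by
            intro j; dsimp only; split_ifs; exacts [hτ j, hσ j]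
          have hupd : (fun l : Fin m => if (l : ℕ) < n + 1 then τ l else σ l) =
              Function.update (fun l : Fin m => if (l : ℕ) < n then τ l else σ l) i (τ i) := by
            funext l
            rcases eq_or_ne l i with rfl | hne
            · simp [Function.update_self, hidef]
            · have hln : (l : ℕ) ≠ n := fun h => hne (Fin.ext h)
              rw [Function.update_of_ne hne]
              rcases Nat.lt_or_ge (l : ℕ) n with h | h
              · rw [if_pos h, if_pos (Nat.lt_succ_of_lt h)]
              · have h1 : ¬ (l : ℕ) < n := not_lt.mpr h
                have h2 : ¬ (l : ℕ) < n + 1 := by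
                  intro hcon
                  exact hln (Nat.le_antisymm (Nat.lt_succ_iff.mp hcon) h)
                rw [if_neg h1, if_neg h2]
          have hself : Function.update (fun l : Fin m => if (l : ℕ) < n then τ l else σ l) i (σ i) =
              (fun l : Fin m => if (l : ℕ) < n then τ l else σ l) := by
            have : σ i = (fun l : Fin m => if (l : ℕ) < n then τ l else σ l) i := by
              simp [hidef]
            rw [this, Function.update_eq_self]
          have hp := hpot i _ hmemh (τ i) (hτ i)
          have hPay := hPayLip i _ hmemh (σ i) (hσ i) (τ i) (hτ i)
          rw [hself] at hPay
          have hstep1 : |P (fun l : Fin m => if (l : ℕ) < n + 1 then τ l else σ l) -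
              P (fun l : Fin m => if (l : ℕ) < n then τ l else σ l)| ≤ (M i / w i) * ‖τ i - σ i‖ := by
            rw [hupd]
            rw [div_mul_eq_mul_div, le_div_iff₀ (hw i)]
            have habs : |P (fun l : Fin m => if (l : ℕ) < n then τ l else σ l) -
                P (Function.update (fun l : Fin m => if (l : ℕ) < n then τ l else σ l) i (τ i))| * w i
                = |Pay i (fun l : Fin m => if (l : ℕ) < n then τ l else σ l) -
                  Pay i (Function.update (fun l : Fin m => if (l : ℕ) < n then τ l else σ l) i (τ i))| := by
              rw [hp, abs_mul, abs_of_pos (hw i), mul_comm]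
            rw [abs_sub_comm]
            rw [habs]
            calc |Pay i (fun l : Fin m => if (l : ℕ) < n then τ l else σ l) -
                  Pay i (Function.update (fun l : Fin m => if (l : ℕ) < n then τ l else σ l) i (τ i))|
                = ‖Pay i (Function.update (fun l : Fin m => if (l : ℕ) < n then τ l else σ l) i (τ i)) -
                    Pay i (fun l : Fin m => if (l : ℕ) < n then τ l else σ l)‖ := by
                  rw [Real.norm_eq_abs, abs_sub_comm]
              _ ≤ M i * ‖τ i - σ i‖ := hPay
          have hsum : ∑ j : Fin m, (if (j : ℕ) < n + 1 then (M j / w j) * ‖τ j - σ j‖ else 0) =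
              (∑ j : Fin m, (if (j : ℕ) < n then (M j / w j) * ‖τ j - σ j‖ else 0)) +
                (M i / w i) * ‖τ i - σ i‖ := by
            have : ∀ j : Fin m, (if (j : ℕ) < n + 1 then (M j / w j) * ‖τ j - σ j‖ else 0) =
                (if (j : ℕ) < n then (M j / w j) * ‖τ j - σ j‖ else 0) +
                  (if j = i then (M i / w i) * ‖τ i - σ i‖ else 0) := by
              intro j
              rcases lt_trichotomy (j : ℕ) n with h | h | h
              · have hne : j ≠ i := fun hc => by
                  rw [hc] at h; exact absurd h (by simp [hidef])
                rw [if_pos (Nat.lt_succ_of_lt h), if_pos h, if_neg hne, add_zero]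
              · have heq : j = i := Fin.ext (by simp [hidef, h])
                rw [if_pos (by omega), if_neg (by omega), if_pos heq, heq, zero_add]
              · have hne : j ≠ i := fun hc => by
                  rw [hc] at h; exact absurd h (by simp [hidef])
                rw [if_neg (by omega), if_neg (by omega), if_neg hne, add_zero]
            rw [Finset.sum_congr rfl fun j _ => this j, Finset.sum_add_distrib,
              Finset.sum_ite_eq' Finset.univ i]
            simp
          rw [hsum]
          calc |P (fun l : Fin m => if (l : ℕ) < n + 1 then τ l else σ l) - P σ|
              ≤ |P (fun l : Fin m => if (l : ℕ) < n + 1 then τ l else σ l) -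
                  P (fun l : Fin m => if (l : ℕ) < n then τ l else σ l)| +
                |P (fun l : Fin m => if (l : ℕ) < n then τ l else σ l) - P σ| := abs_sub_le _ _ _
            _ ≤ (M i / w i) * ‖τ i - σ i‖ +
                ∑ j : Fin m, (if (j : ℕ) < n then (M j / w j) * ‖τ j - σ j‖ else 0) := by
                exact add_le_add hstep1 ih
            _ = _ := by ring
        · have h1 : (fun l : Fin m => if (l : ℕ) < n + 1 then τ l else σ l) =
              (fun l : Fin m => if (l : ℕ) < n then τ l else σ l) := by
            funext l
            have := l.isLt
            rw [if_pos (by omega), if_pos (by omega)]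
          have h2 : ∀ j : Fin m, ((j : ℕ) < n + 1) = ((j : ℕ) < n) := by
            intro j
            have := j.isLt
            simp only [eq_iff_iff]
            omega
          rw [h1]
          calc |P (fun l : Fin m => if (l : ℕ) < n then τ l else σ l) - P σ|
              ≤ ∑ j : Fin m, (if (j : ℕ) < n then (M j / w j) * ‖τ j - σ j‖ else 0) := ih
            _ = _ := Finset.sum_congr rfl fun j _ => by
              have := j.isLt
              rw [if_pos (by omega : (j:ℕ) < n), if_pos (by omega : (j:ℕ) < n + 1)]
    have hfin := claim m
    have h1 : (fun l : Fin m => if (l : ℕ) < m then τ l else σ l) = τ := by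
      funext l; rw [if_pos l.isLt]
    have h2 : ∑ j : Fin m, (if (j : ℕ) < m then (M j / w j) * ‖τ j - σ j‖ else 0) =
        ∑ j, (M j / w j) * ‖τ j - σ j‖ := by
      apply Finset.sum_congr rfl
      intro j _
      rw [if_pos j.isLt]
    rw [h1, h2] at hfin
    exact hfin
  -- continuity of P along sequences in S
  have hPtend : ∀ (u : ℕ → Fin m → EuclideanSpace ℝ (Fin d)) (v : Fin m → EuclideanSpace ℝ (Fin d)),
      (∀ n j, u n j ∈ S j) → (∀ j, v j ∈ S j) →
      (∀ j, Tendsto (fun n => u n j) atTop (nhds (v j))) →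
      Tendsto (fun n => P (u n)) atTop (nhds (P v)) := by
    intro u v hu hv huv
    rw [tendsto_iff_norm_sub_tendsto_zero]
    have hb : ∀ n, ‖P (u n) - P v‖ ≤ ∑ j, (M j / w j) * ‖u n j - v j‖ := by
      intro n
      simpa [Real.norm_eq_abs] using hPdiff v (u n) hv (hu n)
    have hlim0 : Tendsto (fun n => ∑ j, (M j / w j) * ‖u n j - v j‖) atTop (nhds 0) := by
      have : Tendsto (fun n => ∑ j, (M j / w j) * ‖u n j - v j‖) atTop
          (nhds (∑ j : Fin m, (M j / w j) * 0)) := by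
        apply tendsto_finset_sum
        intro j _
        exact (tendsto_iff_norm_sub_tendsto_zero.mp (huv j)).const_mul _
      simpa using this
    exact squeeze_zero (fun n => norm_nonneg _) hb hlim0
  -- hybrid facts
  have hGmem : ∀ k n j, brHybrid s k n j ∈ S j := by
    intro k n j
    unfold brHybrid
    split_ifs
    exacts [hmem (k+1) j, hmem k j]
  have hG0 : ∀ k, brHybrid s k 0 = s k := by
    intro k; funext j; simp [brHybrid]
  have hGm : ∀ k, brHybrid s k m = s (k + 1) := by
    intro k; funext j; simp [brHybrid, j.isLt]
  have hGsucc : ∀ k (i : Fin m),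
      brHybrid s k ((i : ℕ) + 1) = Function.update (brHybrid s k (i : ℕ)) i (s (k + 1) i) := by
    intro k i
    funext l
    rcases eq_or_ne l i with rfl | hne
    · simp [brHybrid, Function.update_self]
    · have hln : (l : ℕ) ≠ (i : ℕ) := fun h => hne (Fin.ext h)
      rw [Function.update_of_ne hne]
      unfold brHybrid
      rcases Nat.lt_or_ge (l : ℕ) (i : ℕ) with h | h
      · rw [if_pos h, if_pos (Nat.lt_succ_of_lt h)]
      · rw [if_neg (not_lt.mpr h), if_neg (by omega)]
  have hGi : ∀ k (i : Fin m), brHybrid s k (i : ℕ) i = s k i := by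
    intro k i; simp [brHybrid]
  -- quantitative improvement step
  have hstep : ∀ k (i : Fin m),
      P (brHybrid s k (i : ℕ)) + α i / (2 * w i) * ‖s (k + 1) i - s k i‖ ^ 2 ≤
        P (brHybrid s k ((i : ℕ) + 1)) := by
    intro k i
    have hcon := hconc i (brHybrid s k (i : ℕ)) (hGmem k (i : ℕ))
    have hmax : ∀ z ∈ S i, Pay i (Function.update (brHybrid s k (i : ℕ)) i z) ≤
        Pay i (Function.update (brHybrid s k (i : ℕ)) i (s (k + 1) i)) := (hs.2 k i).2
    have key := strongConcave_max_gain hcon ((hs.2 k i).1) (hmem k i) hmax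
    have e1 : Function.update (brHybrid s k (i : ℕ)) i (s k i) = brHybrid s k (i : ℕ) := by
      rw [← hGi k i, Function.update_eq_self]
    have hp := hpot i (brHybrid s k (i : ℕ)) (hGmem k (i : ℕ)) (s (k + 1) i) ((hs.2 k i).1)
    rw [e1] at key
    rw [← hGsucc k i] at hp key
    rw [norm_sub_rev] at key
    have hp' : Pay i (brHybrid s k ((i : ℕ) + 1)) - Pay i (brHybrid s k (i : ℕ)) =
        w i * (P (brHybrid s k ((i : ℕ) + 1)) - P (brHybrid s k (i : ℕ))) := by
      linear_combination -hp
    have h7 : α i / 2 * ‖s (k + 1) i - s k i‖ ^ 2 ≤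
        w i * (P (brHybrid s k ((i : ℕ) + 1)) - P (brHybrid s k (i : ℕ))) := by
      linarith
    have h6 : α i / (2 * w i) * ‖s (k + 1) i - s k i‖ ^ 2 ≤
        P (brHybrid s k ((i : ℕ) + 1)) - P (brHybrid s k (i : ℕ)) := by
      have hcalc : α i / (2 * w i) * ‖s (k + 1) i - s k i‖ ^ 2 =
          (α i / 2 * ‖s (k + 1) i - s k i‖ ^ 2) / w i := by ring
      rw [hcalc, div_le_iff₀ (hw i)]
      calc α i / 2 * ‖s (k + 1) i - s k i‖ ^ 2
          ≤ w i * (P (brHybrid s k ((i : ℕ) + 1)) - P (brHybrid s k (i : ℕ))) := h7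
        _ = (P (brHybrid s k ((i : ℕ) + 1)) - P (brHybrid s k (i : ℕ))) * w i := by ring
    linarith
  -- monotonicity of P along sub-steps
  have hmono : ∀ k, Monotone fun n => P (brHybrid s k n) := by
    intro k
    apply monotone_nat_of_le_succ
    intro n
    by_cases hnm : n < m
    · have h := hstep k ⟨n, hnm⟩
      have h0 : 0 ≤ α ⟨n, hnm⟩ / (2 * w ⟨n, hnm⟩) * ‖s (k + 1) ⟨n, hnm⟩ - s k ⟨n, hnm⟩‖ ^ 2 :=
        mul_nonneg (div_nonneg (hα _).le (by linarith [hw (⟨n, hnm⟩ : Fin m)])) (sq_nonneg _)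
      calc P (brHybrid s k n) ≤ P (brHybrid s k n) +
            α ⟨n, hnm⟩ / (2 * w ⟨n, hnm⟩) * ‖s (k + 1) ⟨n, hnm⟩ - s k ⟨n, hnm⟩‖ ^ 2 := by linarith
        _ ≤ P (brHybrid s k (n + 1)) := h
    · have : brHybrid s k (n + 1) = brHybrid s k n := by
        funext l
        have := l.isLt
        unfold brHybrid
        rw [if_pos (by omega), if_pos (by omega)]
      rw [this]
  have hPmonoS : Monotone fun k => P (s k) := by
    apply monotone_nat_of_le_succ
    intro k
    calc P (s k) = P (brHybrid s k 0) := by rw [hG0]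
      _ ≤ P (brHybrid s k m) := hmono k (Nat.zero_le m)
      _ = P (s (k + 1)) := by rw [hGm]
  -- boundedness and convergence of P (s k)
  have hPbdd : ∀ k, P (s k) ≤ P s0 + ∑ j, (M j / w j) * (2 * R) := by
    intro k
    have h := hPdiff s0 (s k) hs0mem (hmem k)
    have h2 : ∑ j, (M j / w j) * ‖s k j - s0 j‖ ≤ ∑ j, (M j / w j) * (2 * R) := by
      apply Finset.sum_le_sum
      intro j _
      apply mul_le_mul_of_nonneg_left _ (div_nonneg (hM0 j) (hw j).le)
      have h1 := hR j _ (hmem k j)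
      have h2 := hR j _ (hs0mem j)
      calc ‖s k j - s0 j‖ ≤ ‖s k j‖ + ‖s0 j‖ := norm_sub_le _ _
        _ ≤ 2 * R := by simp only [hs0def] at *; linarith
    have := abs_le.mp h
    linarith
  obtain ⟨A, hA⟩ : ∃ A, Tendsto (fun k => P (s k)) atTop (nhds A) := by
    refine ⟨_, tendsto_atTop_ciSup hPmonoS ⟨P s0 + ∑ j, (M j / w j) * (2 * R), ?_⟩⟩
    rintro x ⟨k, rfl⟩
    exact hPbdd k
  -- step differences vanish
  have hdelta : ∀ i : Fin m, Tendsto (fun k => s (k + 1) i - s k i) atTop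
      (nhds (0 : EuclideanSpace ℝ (Fin d))) := by
    intro i
    have h1 : ∀ k, P (s k) + α i / (2 * w i) * ‖s (k + 1) i - s k i‖ ^ 2 ≤ P (s (k + 1)) := by
      intro k
      have ha : P (s k) ≤ P (brHybrid s k (i : ℕ)) := by
        rw [← hG0 k]; exact hmono k (Nat.zero_le _)
      have hb : P (brHybrid s k ((i : ℕ) + 1)) ≤ P (s (k + 1)) := by
        rw [← hGm k]; exact hmono k i.isLt
      have := hstep k i
      linarith
    have h2 : Tendsto (fun k => P (s (k + 1)) - P (s k)) atTop (nhds 0) := by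
      have := ((hA.comp (tendsto_add_atTop_nat 1)).sub hA)
      simpa using this
    have h3 : Tendsto (fun k => ‖s (k + 1) i - s k i‖ ^ 2) atTop (nhds 0) := by
      apply squeeze_zero (fun k => sq_nonneg _) (g := fun k => 2 * w i / α i * (P (s (k + 1)) - P (s k)))
      · intro k
        have hk := h1 k
        have hwi := hw i
        have hαi := hα i
        have hwa : (0:ℝ) ≤ 2 * w i / α i := by positivity
        have h5 : α i / (2 * w i) * ‖s (k + 1) i - s k i‖ ^ 2 ≤ P (s (k + 1)) - P (s k) := by
          linarith
        calc ‖s (k + 1) i - s k i‖ ^ 2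
            = 2 * w i / α i * (α i / (2 * w i) * ‖s (k + 1) i - s k i‖ ^ 2) := by
              field_simp
          _ ≤ 2 * w i / α i * (P (s (k + 1)) - P (s k)) :=
              mul_le_mul_of_nonneg_left h5 hwa
      · simpa using h2.const_mul (2 * w i / α i)
    rw [tendsto_zero_iff_norm_tendsto_zero]
    have h4 : Tendsto (fun k => Real.sqrt (‖s (k + 1) i - s k i‖ ^ 2)) atTop (nhds 0) := by
      have := (Real.continuous_sqrt.tendsto 0).comp h3
      simpa [Function.comp_def] using this
    refine h4.congr fun k => ?_
    exact Real.sqrt_sq (norm_nonneg _)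
  -- the previous profiles converge to sstar too
  have hco : ∀ j, Tendsto (fun n => s (φ n) j) atTop (nhds (sstar j)) := fun j =>
    (tendsto_pi_nhds.mp hconv) j
  have hφinf : Tendsto (fun n => φ n - 1) atTop atTop :=
    (tendsto_sub_atTop_nat 1).comp hφ.tendsto_atTop
  have hprev : ∀ j, Tendsto (fun n => s (φ n - 1) j) atTop (nhds (sstar j)) := by
    intro j
    have hdel : Tendsto (fun n => s (φ n - 1 + 1) j - s (φ n - 1) j) atTop
        (nhds (0 : EuclideanSpace ℝ (Fin d))) := (hdelta j).comp hφinf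
    have : Tendsto (fun n => s (φ n) j - (s (φ n - 1 + 1) j - s (φ n - 1) j)) atTop
        (nhds (sstar j - 0)) := (hco j).sub hdel
    rw [sub_zero] at this
    refine this.congr fun n => ?_
    rw [Nat.sub_add_cancel (hφ1 n)]
    abel
  -- final limit argument
  intro i x hx
  have hτtend : ∀ j, Tendsto (fun n => brHybrid s (φ n - 1) (i : ℕ) j) atTop
      (nhds (sstar j)) := by
    intro j
    by_cases hji : (j : ℕ) < (i : ℕ)
    · have he : ∀ n, brHybrid s (φ n - 1) (i : ℕ) j = s (φ n) j := by
        intro n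
        unfold brHybrid
        rw [if_pos hji, Nat.sub_add_cancel (hφ1 n)]
      exact (hco j).congr fun n => (he n).symm
    · have he : ∀ n, brHybrid s (φ n - 1) (i : ℕ) j = s (φ n - 1) j := by
        intro n; unfold brHybrid; rw [if_neg hji]
      exact (hprev j).congr fun n => (he n).symm
  have hkey : ∀ n, P (Function.update (brHybrid s (φ n - 1) (i : ℕ)) i x) ≤
      P (Function.update (brHybrid s (φ n - 1) (i : ℕ)) i (s (φ n) i)) := by
    intro n
    have hBR' : Pay i (Function.update (brHybrid s (φ n - 1) (i : ℕ)) i x) ≤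
        Pay i (Function.update (brHybrid s (φ n - 1) (i : ℕ)) i (s (φ n - 1 + 1) i)) :=
      (hs.2 (φ n - 1) i).2 x hx
    rw [Nat.sub_add_cancel (hφ1 n)] at hBR'
    have hpA := hpot i (brHybrid s (φ n - 1) (i : ℕ)) (fun j => hGmem _ _ j) x hx
    have hpB := hpot i (brHybrid s (φ n - 1) (i : ℕ)) (fun j => hGmem _ _ j)
      (s (φ n) i) (hmem (φ n) i)
    have h9 : w i * (P (brHybrid s (φ n - 1) (i : ℕ)) -
        P (Function.update (brHybrid s (φ n - 1) (i : ℕ)) i (s (φ n) i))) ≤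
        w i * (P (brHybrid s (φ n - 1) (i : ℕ)) -
        P (Function.update (brHybrid s (φ n - 1) (i : ℕ)) i x)) := by
      linarith [hpA, hpB, hBR']
    have := (mul_le_mul_iff_right₀ (hw i)).mp h9
    linarith
  have hu1 : Tendsto (fun n => P (Function.update (brHybrid s (φ n - 1) (i : ℕ)) i x)) atTop
      (nhds (P (Function.update sstar i x))) := by
    apply hPtend
    · intro n j
      rcases eq_or_ne j i with rfl | hne
      · simpa using hx
      · rw [Function.update_of_ne hne]; exact hGmem _ _ j
    · intro j
      rcases eq_or_ne j i with rfl | hne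
      · simpa using hx
      · rw [Function.update_of_ne hne]; exact hstar j
    · intro j
      rcases eq_or_ne j i with rfl | hne
      · simp only [Function.update_self]; exact tendsto_const_nhds
      · simp only [Function.update_of_ne hne]; exact hτtend j
  have hu2 : Tendsto (fun n => P (Function.update (brHybrid s (φ n - 1) (i : ℕ)) i (s (φ n) i)))
      atTop (nhds (P sstar)) := by
    have := hPtend (fun n => Function.update (brHybrid s (φ n - 1) (i : ℕ)) i (s (φ n) i))
      (Function.update sstar i (sstar i)) ?_ ?_ ?_
    · rwa [Function.update_eq_self] at this
    · intro n j
      rcases eq_or_ne j i with rfl | hne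
      · simpa using hmem (φ n) j
      · rw [Function.update_of_ne hne]; exact hGmem _ _ j
    · intro j
      rcases eq_or_ne j i with rfl | hne
      · simpa using hstar j
      · rw [Function.update_of_ne hne]; exact hstar j
    · intro j
      rcases eq_or_ne j i with rfl | hne
      · simp only [Function.update_self]; exact hco j
      · simp only [Function.update_of_ne hne]; exact hτtend j
  have hPfinal : P (Function.update sstar i x) ≤ P sstar :=
    le_of_tendsto_of_tendsto' hu1 hu2 hkey
  have hfin := hpot i sstar hstar x hx
  nlinarith [hfin, hw i, hPfinal]
end

section
/- Let Γ be a w-potential game with potential P satisfying the regularity assumptions, let {s^k}_{k≥0} be a best-response sequence, let δ = min_{i∈[m]} α_i/w_i, and let P* be the maximum value of P over S. Then for every integer K ≥ 1, Σ_{k=1}^K ‖s^k − s^{k−1}‖² ≤ (2/δ)(P* − P(s^0)), where ‖·‖ is the Euclidean norm on the product space. -/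
open Finset Filter

/-- If `x` maximizes an `c`-strongly concave function on `s`, then
`f y + c/2 * ‖y - x‖² ≤ f x` for all `y ∈ s`. -/
lemma strongConcaveOn_max_ineq {E : Type*} [NormedAddCommGroup E] [NormedSpace ℝ E]
    {s : Set E} {c : ℝ} {f : E → ℝ} (hf : StrongConcaveOn s c f) (hc : 0 ≤ c)
    {x y : E} (hx : x ∈ s) (hy : y ∈ s) (hmax : ∀ z ∈ s, f z ≤ f x) :
    f y + c / 2 * ‖y - x‖ ^ 2 ≤ f x := by
  obtain ⟨hconv, h⟩ := hf
  set D : ℝ := c / 2 * ‖y - x‖ ^ 2 with hD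
  have hD0 : 0 ≤ D := by positivity
  have key : ∀ a : ℝ, 0 < a → a < 1 → f y + D ≤ f x + a * D := by
    intro a ha0 ha1
    have hb : (0 : ℝ) ≤ 1 - a := by linarith
    have h2 := h hy hx ha0.le hb (by ring)
    have h3 : a • y + (1 - a) • x ∈ s := hconv hy hx ha0.le hb (by ring)
    have h4 := hmax _ h3
    simp only [smul_eq_mul] at h2
    have h5 : a * (f y + D) ≤ a * (f x + a * D) := by rw [hD]; nlinarith [h2, h4]
    exact le_of_mul_le_mul_left h5 ha0
  refine le_of_forall_pos_le_add fun ε hε => ?_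
  set a : ℝ := min (1 / 2) (ε / (D + 1)) with ha
  have hDp : (0 : ℝ) < D + 1 := by linarith
  have ha0 : 0 < a := lt_min (by norm_num) (by positivity)
  have ha1 : a < 1 := lt_of_le_of_lt (min_le_left _ _) (by norm_num)
  have h5 := key a ha0 ha1
  have h6 : a ≤ ε / (D + 1) := min_le_right _ _
  have h7 : a * (D + 1) ≤ ε := by
    rw [← le_div_iff₀ hDp]; exact h6
  nlinarith

/-- Sum-of-squares estimate for best-response sequences in a
`w`-potential game: `∑_{k=1}^K ‖s^k − s^{k−1}‖² ≤ (2/δ)(P* − P(s⁰))`. -/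
theorem potential_game_BR_sum_of_squares
    (m d : ℕ) (hm : 1 ≤ m)
    (S : Fin m → Set (EuclideanSpace ℝ (Fin d)))
    (hSne : ∀ i, (S i).Nonempty) (hScpt : ∀ i, IsCompact (S i))
    (hScvx : ∀ i, Convex ℝ (S i))
    (Pay : Fin m → (Fin m → EuclideanSpace ℝ (Fin d)) → ℝ)
    (α : Fin m → ℝ) (hα : ∀ i, 0 < α i)
    (hconc : ∀ (i : Fin m) (s : Fin m → EuclideanSpace ℝ (Fin d)), (∀ j, s j ∈ S j) →
      StrongConcaveOn (S i) (α i) (fun x => Pay i (Function.update s i x)))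
    (gradP : Fin m → (Fin m → EuclideanSpace ℝ (Fin d)) → EuclideanSpace ℝ (Fin d))
    (hgrad : ∀ (i : Fin m) (s : Fin m → EuclideanSpace ℝ (Fin d)), (∀ j, s j ∈ S j) →
      HasGradientAt (fun x => Pay i (Function.update s i x)) (gradP i s) (s i))
    (L : ℝ) (hL : 0 < L)
    (hLip : ∀ (i : Fin m) (s s' : Fin m → EuclideanSpace ℝ (Fin d)),
      (∀ j, s j ∈ S j) → (∀ j, s' j ∈ S j) →
      ‖gradP i s - gradP i s'‖ ≤ L * Real.sqrt (∑ j, ‖s j - s' j‖ ^ 2))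
    (w : Fin m → ℝ) (hw : ∀ i, 0 < w i)
    (P : (Fin m → EuclideanSpace ℝ (Fin d)) → ℝ)
    (hpot : ∀ (i : Fin m) (s : Fin m → EuclideanSpace ℝ (Fin d)), (∀ j, s j ∈ S j) →
      ∀ x ∈ S i,
      Pay i s - Pay i (Function.update s i x) = w i * (P s - P (Function.update s i x)))
    (δ : ℝ) (hδ : IsLeast (Set.range fun i => α i / w i) δ)
    (Pstar : ℝ) (hPstar : IsGreatest (P '' {s | ∀ j, s j ∈ S j}) Pstar)
    (s : ℕ → Fin m → EuclideanSpace ℝ (Fin d)) (hs : IsBRSeq S Pay s) :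
    ∀ K : ℕ, 1 ≤ K →
      ∑ k ∈ Finset.range K, ∑ i, ‖s (k + 1) i - s k i‖ ^ 2 ≤
        2 / δ * (Pstar - P (s 0)) := by
  -- δ is positive
  have hδpos : 0 < δ := by
    obtain ⟨i₀, hi₀⟩ := hδ.1
    rw [← hi₀]; exact div_pos (hα i₀) (hw i₀)
  -- all iterates are feasible
  have hmem : ∀ k i, s k i ∈ S i := by
    intro k
    cases k with
    | zero => exact hs.1
    | succ k => exact fun i => (hs.2 k i).1
  -- the intermediate profiles
  set t : ℕ → ℕ → Fin m → EuclideanSpace ℝ (Fin d) :=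
    fun k n j => if (j : ℕ) < n then s (k + 1) j else s k j with ht
  have htmem : ∀ k n j, t k n j ∈ S j := by
    intro k n j
    simp only [ht]
    split <;> exact hmem _ _
  have ht0 : ∀ k, t k 0 = s k := by
    intro k; funext j; simp [ht]
  have htm : ∀ k, t k m = s (k + 1) := by
    intro k; funext j; simp [ht, j.isLt]
  have htsucc : ∀ k (i : Fin m),
      Function.update (t k (i : ℕ)) i (s (k + 1) i) = t k ((i : ℕ) + 1) := by
    intro k i; funext j
    rcases eq_or_ne j i with rfl | hj
    · simp [ht]
    · have hj' : (j : ℕ) ≠ (i : ℕ) := fun h => hj (Fin.ext h)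
      have : ((j : ℕ) < (i : ℕ) + 1) ↔ ((j : ℕ) < (i : ℕ)) := by omega
      simp [Function.update_of_ne hj, ht, this]
  have htself : ∀ k (i : Fin m), t k (i : ℕ) i = s k i := by
    intro k i; simp [ht]
  have htback : ∀ k (i : Fin m),
      Function.update (t k ((i : ℕ) + 1)) i (s k i) = t k (i : ℕ) := by
    intro k i; funext j
    rcases eq_or_ne j i with rfl | hj
    · simp [ht]
    · have hj' : (j : ℕ) ≠ (i : ℕ) := fun h => hj (Fin.ext h)
      have : ((j : ℕ) < (i : ℕ) + 1) ↔ ((j : ℕ) < (i : ℕ)) := by omega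
      simp [Function.update_of_ne hj, ht, this, hj.le_iff_lt]
  -- key per-player estimate
  have key : ∀ k (i : Fin m),
      δ / 2 * ‖s (k + 1) i - s k i‖ ^ 2 ≤ P (t k ((i : ℕ) + 1)) - P (t k (i : ℕ)) := by
    intro k i
    have hbr := (hs.2 k i).2
    have hbase : (fun j : Fin m => if (j : ℕ) < (i : ℕ) then s (k + 1) j else s k j) = t k (i : ℕ) := rfl
    rw [hbase] at hbr
    have hsc := hconc i (t k (i : ℕ)) (htmem k (i : ℕ))
    have hineq := strongConcaveOn_max_ineq hsc (hα i).le (hmem (k + 1) i) (hmem k i) hbr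
    -- rewrite payoffs
    have e1 : Function.update (t k (i : ℕ)) i (s (k + 1) i) = t k ((i : ℕ) + 1) := htsucc k i
    have e2 : Function.update (t k (i : ℕ)) i (s k i) = t k (i : ℕ) := by
      rw [← htself k i]; exact Function.update_eq_self i _
    rw [e1, e2] at hineq
    -- potential identity
    have hpid := hpot i (t k ((i : ℕ) + 1)) (htmem k _) (s k i) (hmem k i)
    rw [htback k i] at hpid
    have hnorm : ‖s k i - s (k + 1) i‖ = ‖s (k + 1) i - s k i‖ := norm_sub_rev _ _
    rw [hnorm] at hineq
    -- combine: α i / 2 * N ≤ Pay diff = w i * P diff, δ * w i ≤ α i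
    have hdw : δ * w i ≤ α i := by
      have := hδ.2 ⟨i, rfl⟩
      rwa [le_div_iff₀ (hw i)] at this
    have hN : (0 : ℝ) ≤ ‖s (k + 1) i - s k i‖ ^ 2 := by positivity
    nlinarith [hw i, mul_le_mul_of_nonneg_right hdw hN]
  -- per-step estimate via telescoping over players
  have step : ∀ k, δ / 2 * ∑ i, ‖s (k + 1) i - s k i‖ ^ 2 ≤ P (s (k + 1)) - P (s k) := by
    intro k
    have htel : ∑ n ∈ Finset.range m, (P (t k (n + 1)) - P (t k n)) = P (s (k + 1)) - P (s k) := by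
      rw [Finset.sum_range_sub (fun n => P (t k n)), ht0, htm]
    calc δ / 2 * ∑ i, ‖s (k + 1) i - s k i‖ ^ 2
        = ∑ i : Fin m, δ / 2 * ‖s (k + 1) i - s k i‖ ^ 2 := by rw [Finset.mul_sum]
      _ ≤ ∑ i : Fin m, (P (t k ((i : ℕ) + 1)) - P (t k (i : ℕ))) :=
          Finset.sum_le_sum fun i _ => key k i
      _ = ∑ n ∈ Finset.range m, (P (t k (n + 1)) - P (t k n)) :=
          (Fin.sum_univ_eq_sum_range (fun n => P (t k (n + 1)) - P (t k n)) m)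
      _ = P (s (k + 1)) - P (s k) := htel
  intro K _
  have hsum : δ / 2 * ∑ k ∈ Finset.range K, ∑ i, ‖s (k + 1) i - s k i‖ ^ 2 ≤
      P (s K) - P (s 0) := by
    rw [Finset.mul_sum]
    calc ∑ k ∈ Finset.range K, δ / 2 * ∑ i, ‖s (k + 1) i - s k i‖ ^ 2
        ≤ ∑ k ∈ Finset.range K, (P (s (k + 1)) - P (s k)) :=
          Finset.sum_le_sum fun k _ => step k
      _ = P (s K) - P (s 0) := Finset.sum_range_sub (fun k => P (s k)) K
  have hup : P (s K) ≤ Pstar := hPstar.2 ⟨s K, fun j => hmem K j, rfl⟩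
  rw [div_mul_eq_mul_div, le_div_iff₀ hδpos]
  nlinarith [hsum, hup]
end

section
/- With λ_1 = 2 min_{i∈[m]} α_i q_i/(q̄ + q_i/m), λ_2 = 2 max_{i∈[m]} α_i Q_i/(Q̄ + Q_i/m), and λ* the unique solution in (0, m·min_i α_i) of Σ_{i=1}^m λ*/(2mα_i − λ*) = 1, one has 0 < λ_1 ≤ λ* ≤ λ_2. -/
open Finset

/-- The activation point `λ₁`, the jump point `λ*`, and the
saturation point `λ₂` satisfy `0 < λ₁ ≤ λ* ≤ λ₂`. -/
theorem activation_le_jump_le_saturation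
    (m : ℕ) (hm : 1 ≤ m) (α q Q : Fin m → ℝ)
    (hα : ∀ i, 0 < α i) (hq : ∀ i, 0 < q i) (hqQ : ∀ i, q i ≤ Q i)
    (αmin : ℝ) (hαmin : IsLeast (Set.range α) αmin)
    (qbar : ℝ) (hqbar : qbar = (∑ i, q i) / (m : ℝ))
    (Qbar : ℝ) (hQbar : Qbar = (∑ i, Q i) / (m : ℝ))
    (lam₁ : ℝ)
    (hlam₁ : IsLeast (Set.range fun i => 2 * (α i * q i / (qbar + q i / (m : ℝ)))) lam₁)
    (lam₂ : ℝ)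
    (hlam₂ : IsGreatest (Set.range fun i => 2 * (α i * Q i / (Qbar + Q i / (m : ℝ)))) lam₂)
    (lamstar : ℝ) (hlamstar : lamstar ∈ Set.Ioo 0 ((m : ℝ) * αmin))
    (hlseq : ∑ i, lamstar / (2 * (m : ℝ) * α i - lamstar) = 1) :
    0 < lam₁ ∧ lam₁ ≤ lamstar ∧ lamstar ≤ lam₂ := by
  haveI : NeZero m := ⟨by omega⟩
  have hne : (univ : Finset (Fin m)).Nonempty := univ_nonempty
  have hmpos : (0 : ℝ) < m := by exact_mod_cast Nat.pos_of_ne_zero (by omega)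
  have hQ : ∀ i, 0 < Q i := fun i => lt_of_lt_of_le (hq i) (hqQ i)
  have hqsum : (0 : ℝ) < ∑ i, q i := Finset.sum_pos (fun i _ => hq i) hne
  have hQsum : (0 : ℝ) < ∑ i, Q i := Finset.sum_pos (fun i _ => hQ i) hne
  have hqbar' : 0 < qbar := by rw [hqbar]; positivity
  have hQbar' : 0 < Qbar := by rw [hQbar]; positivity
  have hden : ∀ i, 0 < 2 * (m : ℝ) * α i - lamstar := by
    intro i
    have h1 : αmin ≤ α i := hαmin.2 ⟨i, rfl⟩
    have h2 := hlamstar.2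
    nlinarith [hα i]
  obtain ⟨i₀, hi₀⟩ := hlam₁.1
  have hlam1pos : 0 < lam₁ := by
    rw [← hi₀]
    have := hq i₀; have := hα i₀
    positivity
  refine ⟨hlam1pos, ?_, ?_⟩
  · by_contra h
    push_neg at h
    have key : ∀ i ∈ univ, lamstar / (2 * (m : ℝ) * α i - lamstar)
        < q i / (∑ j, q j) := by
      intro i _
      have hd : 0 < qbar + q i / m := by
        have := div_pos (hq i) hmpos; linarith
      have h1 : lam₁ ≤ 2 * (α i * q i / (qbar + q i / (m : ℝ))) :=
        hlam₁.2 (Set.mem_range_self i)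
      rw [← mul_div_assoc] at h1
      have h1' := (le_div_iff₀ hd).mp h1
      rw [hqbar, ← add_div, ← mul_div_assoc] at h1'
      have h1'' : lam₁ * ((∑ j, q j) + q i) ≤ 2 * (α i * q i) * m :=
        (div_le_iff₀ hmpos).mp h1'
      rw [div_lt_div_iff₀ (hden i) hqsum]
      nlinarith [hq i, h]
    have hsum := Finset.sum_lt_sum_of_nonempty hne key
    rw [hlseq, ← Finset.sum_div, div_self hqsum.ne'] at hsum
    linarith
  · by_contra h
    push_neg at h
    have key : ∀ i ∈ univ, Q i / (∑ j, Q j)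
        < lamstar / (2 * (m : ℝ) * α i - lamstar) := by
      intro i _
      have hd : 0 < Qbar + Q i / m := by
        have := div_pos (hQ i) hmpos; linarith
      have h1 : 2 * (α i * Q i / (Qbar + Q i / (m : ℝ))) ≤ lam₂ :=
        hlam₂.2 (Set.mem_range_self i)
      rw [← mul_div_assoc] at h1
      have h1' := (div_le_iff₀ hd).mp h1
      rw [hQbar, ← add_div, ← mul_div_assoc] at h1'
      have h1'' : 2 * (α i * Q i) * m ≤ lam₂ * ((∑ j, Q j) + Q i) :=
        (le_div_iff₀ hmpos).mp h1'
      rw [div_lt_div_iff₀ hQsum (hden i)]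
      nlinarith [hQ i, h]
    have hsum := Finset.sum_lt_sum_of_nonempty hne key
    rw [hlseq, ← Finset.sum_div, div_self hQsum.ne'] at hsum
    linarith
end
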